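/- Let x ≤ w in S_n and suppose indices i < j < k < l satisfy x(j) < x(i) < x(l) < x(k). If x < x·t_{i,k} ≤ w and x < x·t_{j,l} ≤ w, then x < x·t_{i,l} ≤ w. -/

import Mathlib

open Equiv

/-- Rank function: `rk w i j = #{u = 1,...,i : w(u) ≤ j}` (1-based via `Fin`). -/
def rk {n : ℕ} (w : Equiv.Perm (Fin n)) (i j : ℕ) : ℕ :=
  (Finset.univ.filter (fun u : Fin n => u.val + 1 ≤ i ∧ (w u).val + 1 ≤ j)).card

/-- Coxeter length = number of inversions. -/
def len {n : ℕ} (w : Equiv.Perm (Fin n)) : ℕ :=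
  (Finset.univ.filter (fun p : Fin n × Fin n => p.1 < p.2 ∧ w p.2 < w p.1)).card

/-- A transposition. -/
def IsTransposition {n : ℕ} (t : Equiv.Perm (Fin n)) : Prop :=
  ∃ i j : Fin n, i ≠ j ∧ t = Equiv.swap i j

/-- Bruhat order: generated by `x → x·t` for transpositions `t` increasing the length. -/
def bruhatLE {n : ℕ} : Equiv.Perm (Fin n) → Equiv.Perm (Fin n) → Prop :=
  Relation.ReflTransGen (fun x y => ∃ t, IsTransposition t ∧ y = x * t ∧ len x < len y)

/-- Strict Bruhat order. -/
def bruhatLT {n : ℕ} (x y : Equiv.Perm (Fin n)) : Prop := bruhatLE x y ∧ x ≠ y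

/-- Difference function `d_w(p,p')`. -/
def dOf {n : ℕ} (w : Equiv.Perm (Fin n)) (p q : ℕ × ℕ) : ℤ :=
  (rk w p.1 p.2 : ℤ) + rk w q.1 q.2 - rk w p.1 q.2 - rk w q.1 p.2

/-- Strictly comparable points: `(i'−i)(j'−j) > 0`. -/
def SCmp (p q : ℕ × ℕ) : Prop := (p.1 < q.1 ∧ p.2 < q.2) ∨ (q.1 < p.1 ∧ q.2 < p.2)

/-- Corners of the rectangle spanned by `p`, `q`. -/
def corners (p q : ℕ × ℕ) : Set (ℕ × ℕ) := {(p.1, q.2), (q.1, p.2)}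


namespace BAux
open Finset
variable {n : ℕ}

lemma rk_eq_sum (u : Perm (Fin n)) (i c : ℕ) :
    rk u i c = ∑ v : Fin n, (if v.val + 1 ≤ i ∧ (u v).val + 1 ≤ c then 1 else 0) := by
  rw [rk, Finset.card_filter]

lemma sum_split (a b : Fin n) (hab : a ≠ b) (f : Fin n → ℕ) :
    ∑ v : Fin n, f v = (∑ v ∈ (univ.erase a).erase b, f v) + f b + f a := by
  rw [Finset.sum_erase_add _ _ (by simp [hab.symm] : b ∈ univ.erase a),
    Finset.sum_erase_add _ _ (mem_univ a)]

lemma rk_mul_swap (u : Perm (Fin n)) (a b : Fin n) (hab : a < b) (hv : u a < u b) (i c : ℕ) :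
    rk (u * Equiv.swap a b) i c
      + (if a.val + 1 ≤ i ∧ i ≤ b.val ∧ (u a).val + 1 ≤ c ∧ c ≤ (u b).val then 1 else 0)
      = rk u i c := by
  have hab' : a ≠ b := hab.ne
  rw [rk_eq_sum, rk_eq_sum]
  have hre : ∑ v : Fin n, (if v.val + 1 ≤ i ∧ ((u * Equiv.swap a b) v).val + 1 ≤ c then 1 else 0)
      = ∑ v : Fin n, (if (Equiv.swap a b v).val + 1 ≤ i ∧ (u v).val + 1 ≤ c then 1 else 0) := by
    rw [← Equiv.sum_comp (Equiv.swap a b)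
      (fun v => if (Equiv.swap a b v).val + 1 ≤ i ∧ (u v).val + 1 ≤ c then 1 else 0)]
    refine Finset.sum_congr rfl fun v _ => ?_
    simp [Equiv.swap_apply_self, Equiv.Perm.mul_apply]
  rw [hre, sum_split a b hab', sum_split a b hab'
    (fun v => if v.val + 1 ≤ i ∧ (u v).val + 1 ≤ c then 1 else 0)]
  have hcongr : ∑ v ∈ (univ.erase a).erase b,
      (if (Equiv.swap a b v).val + 1 ≤ i ∧ (u v).val + 1 ≤ c then 1 else 0)
      = ∑ v ∈ (univ.erase a).erase b,
      (if v.val + 1 ≤ i ∧ (u v).val + 1 ≤ c then 1 else 0) := by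
    refine Finset.sum_congr rfl fun v hv => ?_
    simp only [mem_erase] at hv
    rw [Equiv.swap_apply_of_ne_of_ne hv.2.1 hv.1]
  rw [hcongr, Equiv.swap_apply_left, Equiv.swap_apply_right]
  have h1 : a.val < b.val := hab
  have h2 : (u a).val < (u b).val := hv
  split_ifs <;> omega

lemma len_lt (u : Perm (Fin n)) (a b : Fin n) (hab : a < b) (hv : u a < u b) :
    len u < len (u * Equiv.swap a b) := by
  set σ := Equiv.swap a b with hσ
  have hσa : σ a = b := Equiv.swap_apply_left a b
  have hσb : σ b = a := Equiv.swap_apply_right a b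
  have hσσ : ∀ x, σ (σ x) = x := fun x => Equiv.swap_apply_self a b x
  have hσinj : Function.Injective σ := σ.injective
  set Inv' : Finset (Fin n × Fin n) :=
    Finset.univ.filter (fun p : Fin n × Fin n => p.1 < p.2 ∧ (u * σ) p.2 < (u * σ) p.1) with hInv'
  have hlen' : len (u * σ) = Inv'.card := rfl
  have hmem_ab : (a, b) ∈ Inv' := by
    rw [hInv', Finset.mem_filter]
    simp only [mem_univ, true_and, Equiv.Perm.mul_apply, hσa, hσb]
    exact ⟨hab, hv⟩
  set ψ : Fin n × Fin n → Fin n × Fin n := fun p => if σ p.1 < σ p.2 then (σ p.1, σ p.2) else p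
    with hψ
  have key : len u ≤ (Inv'.erase (a, b)).card := by
    apply Finset.card_le_card_of_injOn ψ
    · intro p hp
      simp only [len, Finset.mem_coe, mem_filter, mem_univ, true_and] at hp
      obtain ⟨hpq, huq⟩ := hp
      rw [Finset.mem_coe, mem_erase]
      by_cases hbr : σ p.1 < σ p.2
      · constructor
        · simp only [hψ, if_pos hbr]
          intro h
          have h1 : σ p.1 = a := congrArg Prod.fst h
          have h2 : σ p.2 = b := congrArg Prod.snd h
          have : p.1 = b := by rw [← hσa, ← h1, hσσ]
          have : p.2 = a := by rw [← hσb, ← h2, hσσ]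
          have := hpq
          omega
        · rw [hInv', Finset.mem_filter]
          simp only [hInv', hψ, if_pos hbr, mem_filter, mem_univ, true_and,
            Equiv.Perm.mul_apply, hσσ]
          exact ⟨hbr, huq⟩
      · constructor
        · simp only [hψ, if_neg hbr]
          intro h
          have h1 : p.1 = a := congrArg Prod.fst h
          have h2 : p.2 = b := congrArg Prod.snd h
          rw [h1, h2] at huq
          exact absurd hv (not_lt.2 huq.le)
        · rw [hInv', Finset.mem_filter]
          simp only [hInv', hψ, if_neg hbr, mem_filter, mem_univ, true_and,
            Equiv.Perm.mul_apply]
          refine ⟨hpq, ?_⟩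
          have hne : p.1 ≠ p.2 := hpq.ne
          have hσlt : σ p.2 < σ p.1 :=
            lt_of_le_of_ne (not_lt.1 hbr) (fun h => hne ((hσinj h).symm))
          by_cases h1a : p.1 = a
          · by_cases h2b : p.2 = b
            · rw [h1a, h2b, hσa, hσb]; exact hv
            · have h2a : p.2 ≠ a := fun h => by
                have h' := hpq; rw [h1a, h] at h'; exact lt_irrefl _ h'
              rw [Equiv.swap_apply_of_ne_of_ne h2a h2b, h1a, hσa]
              rw [h1a] at huq
              exact huq.trans hv
          · by_cases h1b : p.1 = b
            · -- σ p.1 = a, p.2 ≠ a, p.2 ≠ b since p.2 > p.1 = b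
              have h2b : p.2 ≠ b := fun h => by
                have h' := hpq; rw [h1b, h] at h'; exact lt_irrefl _ h'
              have h2a : p.2 ≠ a := fun h => by
                have := hab.trans (h ▸ h1b ▸ hpq); exact lt_irrefl _ this
              rw [h1b, hσb, Equiv.swap_apply_of_ne_of_ne h2a h2b] at hσlt
              have : p.2 < a := hσlt
              have : b < p.2 := h1b ▸ hpq
              have := hab
              omega
            · by_cases h2b : p.2 = b
              · rw [Equiv.swap_apply_of_ne_of_ne h1a h1b, h2b, hσb]
                have : u p.2 = u b := by rw [h2b]
                calc u a < u b := hv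
                  _ = u p.2 := by rw [h2b]
                  _ < u p.1 := huq
              · by_cases h2a : p.2 = a
                · rw [Equiv.swap_apply_of_ne_of_ne h1a h1b, h2a, hσa] at hσlt
                  have : p.1 < p.2 := hpq
                  have : p.2 = a := h2a
                  have : b < p.1 := hσlt
                  have := hab
                  omega
                · rw [Equiv.swap_apply_of_ne_of_ne h1a h1b,
                    Equiv.swap_apply_of_ne_of_ne h2a h2b] at hσlt
                  exact absurd hpq (not_lt.2 hσlt.le)
    · intro p hp q hq hpq'
      have hp' := (Finset.mem_filter.1 (Finset.mem_coe.1 hp)).2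
      have hq' := (Finset.mem_filter.1 (Finset.mem_coe.1 hq)).2
      simp only [hψ] at hpq'
      by_cases h1 : σ p.1 < σ p.2 <;> by_cases h2 : σ q.1 < σ q.2
      · rw [if_pos h1, if_pos h2] at hpq'
        have e1 : σ p.1 = σ q.1 := congrArg Prod.fst hpq'
        have e2 : σ p.2 = σ q.2 := congrArg Prod.snd hpq'
        exact Prod.ext (hσinj e1) (hσinj e2)
      · rw [if_pos h1, if_neg h2] at hpq'
        have e1 : σ p.1 = q.1 := congrArg Prod.fst hpq'
        have e2 : σ p.2 = q.2 := congrArg Prod.snd hpq'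
        rw [← e1, ← e2, hσσ, hσσ] at h2
        exact absurd hp'.1 h2
      · rw [if_neg h1, if_pos h2] at hpq'
        have e1 : p.1 = σ q.1 := congrArg Prod.fst hpq'
        have e2 : p.2 = σ q.2 := congrArg Prod.snd hpq'
        rw [e1, e2, hσσ, hσσ] at h1
        exact absurd hq'.1 h1
      · rw [if_neg h1, if_neg h2] at hpq'
        exact hpq'
  calc len u ≤ (Inv'.erase (a, b)).card := key
    _ < Inv'.card := Finset.card_erase_lt_of_mem hmem_ab
    _ = len (u * σ) := rfl

lemma rk_col_split (u : Perm (Fin n)) (i : ℕ) {c d : ℕ} (hcd : c ≤ d) :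
    rk u i d = rk u i c +
      (Finset.univ.filter
        (fun v : Fin n => v.val + 1 ≤ i ∧ c < (u v).val + 1 ∧ (u v).val + 1 ≤ d)).card := by
  rw [rk_eq_sum, rk_eq_sum, Finset.card_filter, ← Finset.sum_add_distrib]
  refine Finset.sum_congr rfl fun v _ => ?_
  split_ifs <;> omega

lemma rk_row_succ (u : Perm (Fin n)) (p : Fin n) (c : ℕ) :
    rk u (p.val + 1) c = rk u p.val c + (if (u p).val + 1 ≤ c then 1 else 0) := by
  rw [rk_eq_sum, rk_eq_sum, ← Finset.sum_erase_add _ _ (mem_univ p),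
    ← Finset.sum_erase_add _ _ (mem_univ p), add_assoc]
  congr 1
  · refine Finset.sum_congr rfl fun v hv => ?_
    have hvp : v.val ≠ p.val := fun h => (Finset.mem_erase.1 hv).1 (Fin.ext h)
    split_ifs <;> omega
  · split_ifs <;> omega

lemma rk_congr_prefix (u w' : Perm (Fin n)) (i c : ℕ) (h : ∀ v : Fin n, v.val < i → u v = w' v) :
    rk u i c = rk w' i c := by
  rw [rk_eq_sum, rk_eq_sum]
  refine Finset.sum_congr rfl fun v _ => ?_
  by_cases hv : v.val + 1 ≤ i
  · rw [h v (by omega)]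
  · simp [hv]

lemma rk_step (u : Perm (Fin n)) (p q : Fin n) (hpq : p < q)
    (hlen : len u < len (u * Equiv.swap p q)) (i c : ℕ) :
    rk (u * Equiv.swap p q) i c ≤ rk u i c := by
  have hval : u p < u q := by
    by_contra h
    push_neg at h
    have hne : u q ≠ u p := fun e => hpq.ne (u.injective e.symm)
    have h2 : u q < u p := lt_of_le_of_ne h hne
    have hlt := len_lt (u * Equiv.swap p q) p q hpq (by
      have e1 : (u * Equiv.swap p q) p = u q := by
        simp [Equiv.Perm.mul_apply, Equiv.swap_apply_left]
      have e2 : (u * Equiv.swap p q) q = u p := by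
        simp [Equiv.Perm.mul_apply, Equiv.swap_apply_right]
      rw [e1, e2]; exact h2)
    rw [mul_assoc, Equiv.swap_mul_self, mul_one] at hlt
    omega
  have := rk_mul_swap u p q hpq hval i c
  omega

lemma rk_le_of_bruhatLE (x w : Perm (Fin n)) (h : bruhatLE x w) (i c : ℕ) :
    rk w i c ≤ rk x i c := by
  induction h with
  | refl => exact le_refl _
  | tail hxb hbw ih =>
    obtain ⟨t, ⟨p, q, hpq, rfl⟩, rfl, hlen⟩ := hbw
    rcases lt_or_gt_of_ne hpq with hlt | hgt
    · exact (rk_step _ p q hlt hlen i c).trans ih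
    · rw [Equiv.swap_comm] at hlen ⊢
      exact (rk_step _ q p hgt hlen i c).trans ih

/-- Total rank excess, used as termination measure. -/
def Dsum (u w : Perm (Fin n)) : ℕ :=
  ∑ p ∈ (Finset.range (n + 1)) ×ˢ (Finset.range (n + 1)), (rk u p.1 p.2 - rk w p.1 p.2)

lemma exists_step (u w : Perm (Fin n)) (hne : u ≠ w)
    (hrk : ∀ i c, rk w i c ≤ rk u i c) :
    ∃ a b : Fin n, a < b ∧ u a < u b ∧
      (∀ i c, rk w i c ≤ rk (u * Equiv.swap a b) i c) ∧
      Dsum (u * Equiv.swap a b) w < Dsum u w := by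
  -- the first position where u and w differ
  have hsne : (Finset.univ.filter (fun v : Fin n => u v ≠ w v)).Nonempty := by
    by_contra h
    rw [Finset.not_nonempty_iff_eq_empty, Finset.filter_eq_empty_iff] at h
    exact hne (Equiv.ext fun v => not_ne_iff.1 (h (mem_univ v)))
  set a : Fin n := (Finset.univ.filter (fun v : Fin n => u v ≠ w v)).min' hsne with ha_def
  have ha : u a ≠ w a := (Finset.mem_filter.1 ((Finset.univ.filter _).min'_mem hsne)).2
  have hpre : ∀ v : Fin n, v < a → u v = w v := by
    intro v hv
    by_contra h
    exact absurd (Finset.min'_le _ v (Finset.mem_filter.2 ⟨mem_univ v, h⟩)) (not_le.2 hv)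
  have hpre' : ∀ v : Fin n, v.val < a.val → u v = w v := fun v hv => hpre v hv
  -- u a < w a
  have huwa : u a < w a := by
    have h1 := hrk (a.val + 1) ((w a).val + 1)
    rw [rk_row_succ, rk_row_succ, rk_congr_prefix u w a.val ((w a).val + 1) hpre'] at h1
    have hne' : (u a).val ≠ (w a).val := fun h => ha (Fin.ext h)
    rw [Fin.lt_def]
    split_ifs at h1 <;> omega
  -- the minimal b > a with u a < u b ≤ w a
  have hsbne : (Finset.univ.filter (fun v : Fin n => a < v ∧ u a < u v ∧ u v ≤ w a)).Nonempty := by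
    refine ⟨u.symm (w a), Finset.mem_filter.2 ⟨mem_univ _, ?_, ?_, ?_⟩⟩
    · have hm : u (u.symm (w a)) = w a := u.apply_symm_apply _
      have hma : u.symm (w a) ≠ a := fun h =>
        ha ((by rw [h] : u a = u (u.symm (w a))).trans hm)
      rcases lt_or_ge (u.symm (w a)) a with hlt | hle
      · exfalso
        have := hpre _ hlt
        rw [hm] at this
        exact hma (w.injective this.symm)
      · exact lt_of_le_of_ne hle (Ne.symm hma)
    · rw [u.apply_symm_apply]; exact huwa
    · rw [u.apply_symm_apply]
  have hbm := Finset.min'_mem (Finset.univ.filter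
    (fun v : Fin n => a < v ∧ u a < u v ∧ u v ≤ w a)) hsbne
  set b : Fin n := (Finset.univ.filter
    (fun v : Fin n => a < v ∧ u a < u v ∧ u v ≤ w a)).min' hsbne with hb_def
  rw [Finset.mem_filter] at hbm
  obtain ⟨-, hab, hvab, hbwa⟩ := hbm
  have hminb : ∀ v : Fin n, a < v → u a < u v → u v ≤ w a → b ≤ v := fun v h1 h2 h3 =>
    Finset.min'_le _ v (Finset.mem_filter.2 ⟨mem_univ v, h1, h2, h3⟩)
  -- strictness on the rectangle
  have strict : ∀ i c, a.val + 1 ≤ i → i ≤ b.val → (u a).val + 1 ≤ c → c ≤ (u b).val →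
      rk w i c < rk u i c := by
    intro i c hi1 hi2 hc1 hc2
    by_contra hcon
    push_neg at hcon
    have hcW : c ≤ (w a).val := le_trans hc2 hbwa
    -- Step A : compare windows (c, (w a).val]
    have hwin : (Finset.univ.filter
        (fun v : Fin n => v.val + 1 ≤ i ∧ c < (u v).val + 1 ∧ (u v).val + 1 ≤ (w a).val)).card
        ≤ (Finset.univ.filter
        (fun v : Fin n => v.val + 1 ≤ i ∧ c < (w v).val + 1 ∧ (w v).val + 1 ≤ (w a).val)).card := by
      apply Finset.card_le_card
      intro v hv
      rw [Finset.mem_filter] at hv ⊢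
      obtain ⟨_, hv1, hv2, hv3⟩ := hv
      have hva : u a < u v := by
        rw [Fin.lt_def]; omega
      have hvwa : u v ≤ w a := by
        rw [Fin.le_def]; omega
      have hvb : v < b := by
        rw [Fin.lt_def]; omega
      have hlt : v < a := by
        rcases lt_trichotomy v a with h | h | h
        · exact h
        · exact absurd hva (by rw [h]; exact lt_irrefl _)
        · exact absurd (hminb v h hva hvwa) (not_le.2 hvb)
      have := hpre v hlt
      rw [this] at hv2 hv3
      exact ⟨mem_univ v, hv1, hv2, hv3⟩
    have hsu := rk_col_split u i hcW
    have hsw := rk_col_split w i hcW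
    -- so rk u i (w a).val ≤ rk w i (w a).val
    have hA : rk u i (w a).val ≤ rk w i (w a).val := by omega
    -- Step B : column (w a).val + 1
    have hsu2 := rk_col_split u i (show (w a).val ≤ (w a).val + 1 by omega)
    have hsw2 := rk_col_split w i (show (w a).val ≤ (w a).val + 1 by omega)
    have hwa_mem : a ∈ Finset.univ.filter
        (fun v : Fin n => v.val + 1 ≤ i ∧ (w a).val < (w v).val + 1 ∧ (w v).val + 1 ≤ (w a).val + 1) :=
      Finset.mem_filter.2 ⟨mem_univ a, by omega, by omega, by omega⟩
    have hwcard : 1 ≤ (Finset.univ.filter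
        (fun v : Fin n => v.val + 1 ≤ i ∧ (w a).val < (w v).val + 1 ∧ (w v).val + 1 ≤ (w a).val + 1)).card :=
      Finset.card_pos.2 ⟨a, hwa_mem⟩
    have hrkW := hrk i ((w a).val + 1)
    have hucard : 0 < (Finset.univ.filter
        (fun v : Fin n => v.val + 1 ≤ i ∧ (w a).val < (u v).val + 1 ∧ (u v).val + 1 ≤ (w a).val + 1)).card := by
      omega
    obtain ⟨v, hv⟩ := Finset.card_pos.1 hucard
    rw [Finset.mem_filter] at hv
    obtain ⟨_, hv1, hv2, hv3⟩ := hv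
    have hveq : u v = w a := Fin.ext (by omega)
    have hva : v ≠ a := fun h => ha (h ▸ hveq)
    have hnlt : ¬ v < a := fun hlt => by
      have he := hpre v hlt
      rw [he] at hveq
      exact hva (w.injective hveq)
    have hav : a < v := lt_of_le_of_ne (not_lt.1 hnlt) (Ne.symm hva)
    have hble := hminb v hav (by rw [hveq]; exact huwa) (le_of_eq hveq)
    have hvb : (v : ℕ) < (b : ℕ) := by omega
    exact absurd hble (not_le.2 (by rw [Fin.lt_def]; omega))
  -- assemble
  refine ⟨a, b, hab, hvab, ?_, ?_⟩
  · intro i c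
    have hms := rk_mul_swap u a b hab hvab i c
    by_cases hR : a.val + 1 ≤ i ∧ i ≤ b.val ∧ (u a).val + 1 ≤ c ∧ c ≤ (u b).val
    · have hs := strict i c hR.1 hR.2.1 hR.2.2.1 hR.2.2.2
      rw [if_pos hR] at hms
      omega
    · rw [if_neg hR] at hms
      have := hrk i c
      omega
  · simp only [Dsum]
    apply Finset.sum_lt_sum
    · intro p hp
      have hms := rk_mul_swap u a b hab hvab p.1 p.2
      split_ifs at hms <;> omega
    · refine ⟨(a.val + 1, (u a).val + 1), ?_, ?_⟩
      · simp only [Finset.mem_product, Finset.mem_range]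
        exact ⟨by have := a.isLt; omega, by have := (u a).isLt; omega⟩
      · have hms := rk_mul_swap u a b hab hvab (a.val + 1) ((u a).val + 1)
        have h1 : a.val < b.val := hab
        have h2 : (u a).val < (u b).val := hvab
        have hcond : a.val + 1 ≤ a.val + 1 ∧ a.val + 1 ≤ b.val ∧
            (u a).val + 1 ≤ (u a).val + 1 ∧ (u a).val + 1 ≤ (u b).val := by omega
        rw [if_pos hcond] at hms
        dsimp only
        have hs := strict (a.val + 1) ((u a).val + 1) (le_refl _) hcond.2.1 (le_refl _)
          hcond.2.2.2
        omega

lemma bruhatLE_of_rk_aux (w : Perm (Fin n)) :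
    ∀ (N : ℕ) (u : Perm (Fin n)), Dsum u w ≤ N → (∀ i c, rk w i c ≤ rk u i c) →
      bruhatLE u w := by
  intro N
  induction N with
  | zero =>
    intro u hD hrk
    by_cases hne : u = w
    · rw [hne]; exact Relation.ReflTransGen.refl
    · obtain ⟨a, b, hab, hvab, hrk', hD'⟩ := exists_step u w hne hrk
      omega
  | succ N ih =>
    intro u hD hrk
    by_cases hne : u = w
    · rw [hne]; exact Relation.ReflTransGen.refl
    · obtain ⟨a, b, hab, hvab, hrk', hD'⟩ := exists_step u w hne hrk
      have htail := ih (u * Equiv.swap a b) (by omega) hrk'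
      exact Relation.ReflTransGen.head
        ⟨Equiv.swap a b, ⟨a, b, hab.ne, rfl⟩, rfl, len_lt u a b hab hvab⟩ htail

lemma bruhatLE_of_rk (u w : Perm (Fin n)) (hrk : ∀ i c, rk w i c ≤ rk u i c) :
    bruhatLE u w :=
  bruhatLE_of_rk_aux w (Dsum u w) u (le_refl _) hrk

end BAux

open BAux in
theorem stmt6 (n : ℕ) (x w : Equiv.Perm (Fin n)) (hxw : bruhatLE x w)
    (i j k l : Fin n) (hij : i < j) (hjk : j < k) (hkl : k < l)
    (h1 : x j < x i) (h2 : x i < x l) (h3 : x l < x k)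
    (hik : bruhatLT x (x * Equiv.swap i k) ∧ bruhatLE (x * Equiv.swap i k) w)
    (hjl : bruhatLT x (x * Equiv.swap j l) ∧ bruhatLE (x * Equiv.swap j l) w) :
    bruhatLT x (x * Equiv.swap i l) ∧ bruhatLE (x * Equiv.swap i l) w := by
  have hil : i < l := (hij.trans hjk).trans hkl
  have hikpos : i < k := hij.trans hjk
  have hjlpos : j < l := hjk.trans hkl
  have hxik : x i < x k := h2.trans h3
  have hxjl : x j < x l := h1.trans h2
  constructor
  · constructor
    · exact Relation.ReflTransGen.single
        ⟨Equiv.swap i l, ⟨i, l, hil.ne, rfl⟩, rfl, len_lt x i l hil h2⟩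
    · intro h
      have : x i = x l := by
        conv_lhs => rw [h]
        rw [Equiv.Perm.mul_apply, Equiv.swap_apply_left]
      exact absurd this (ne_of_lt h2)
  · apply bruhatLE_of_rk
    intro p c
    have h_ik := rk_le_of_bruhatLE _ _ hik.2 p c
    have h_jl := rk_le_of_bruhatLE _ _ hjl.2 p c
    have h_x := rk_le_of_bruhatLE _ _ hxw p c
    have e_il := rk_mul_swap x i l hil h2 p c
    have e_ik := rk_mul_swap x i k hikpos hxik p c
    have e_jl := rk_mul_swap x j l hjlpos hxjl p c
    have c1 : (i : ℕ) < (j : ℕ) := hij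
    have c2 : (j : ℕ) < (k : ℕ) := hjk
    have c3 : (k : ℕ) < (l : ℕ) := hkl
    have v1 : ((x j) : ℕ) < ((x i) : ℕ) := h1
    have v2 : ((x i) : ℕ) < ((x l) : ℕ) := h2
    have v3 : ((x l) : ℕ) < ((x k) : ℕ) := h3
    split_ifs at e_il e_ik e_jl <;> omega
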